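/- Let G be a weighted DAG with source s, sink t, and SW(G) the weighted sum over s–t paths. Form G' from G by adding an edge of weight 1 from t to s and a loop of weight 1 at every vertex other than s and t. Then the sum of weights of all cycle covers of G' equals SW(G). -/

import Mathlib

open scoped Classical

/-! ### Arithmetic formulas -/

inductive Formula (K : Type) (ν : Type) where
  | const : K → Formula K ν
  | var : ν → Formula K ν
  | add : Formula K ν → Formula K ν → Formula K ν
  | mul : Formula K ν → Formula K ν → Formula K ν

namespace Formula
variable {K ν : Type}

/-- Number of gates of a formula. -/
def size : Formula K ν → ℕ
  | const _ => 1
  | var _ => 1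
  | add f g => f.size + g.size + 1
  | mul f g => f.size + g.size + 1

/-- Depth of a formula: longest path from an input to the output. -/
def depth : Formula K ν → ℕ
  | const _ => 0
  | var _ => 0
  | add f g => max f.depth g.depth + 1
  | mul f g => max f.depth g.depth + 1

def eval [CommRing K] (x : ν → K) : Formula K ν → K
  | const c => c
  | var v => x v
  | add f g => f.eval x + g.eval x
  | mul f g => f.eval x * g.eval x

/-- The polynomial computed by a formula. -/
noncomputable def toPoly [CommRing K] : Formula K ν → MvPolynomial ν K
  | const c => MvPolynomial.C c
  | var v => MvPolynomial.X v
  | add f g => f.toPoly + g.toPoly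
  | mul f g => f.toPoly * g.toPoly

/-- The set of variables appearing in a formula. -/
def varSet : Formula K ν → Set ν
  | const _ => ∅
  | var v => {v}
  | add f g => f.varSet ∪ g.varSet
  | mul f g => f.varSet ∪ g.varSet

/-- All constants of the formula are 0 or 1. -/
def ZeroOneConsts [Zero K] [One K] : Formula K ν → Prop
  | const c => c = 0 ∨ c = 1
  | var _ => True
  | add f g => f.ZeroOneConsts ∧ g.ZeroOneConsts
  | mul f g => f.ZeroOneConsts ∧ g.ZeroOneConsts

end Formula

/-! ### Arithmetic circuits -/

inductive CGate (K ν : Type) (n : ℕ) where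
  | const : K → CGate K ν n
  | var : ν → CGate K ν n
  | add : Fin n → Fin n → CGate K ν n
  | mul : Fin n → Fin n → CGate K ν n

def CGate.IsInput {K ν : Type} {n : ℕ} : CGate K ν n → Prop
  | .const _ => True
  | .var _ => True
  | _ => False

/-- An arithmetic circuit: an acyclic digraph of gates, the last gate being the output. -/
structure Circuit (K ν : Type) where
  size : ℕ
  pos : 0 < size
  gate : Fin size → CGate K ν size
  wf : ∀ i a b, (gate i = .add a b ∨ gate i = .mul a b) → a < i ∧ b < i

namespace Circuit
variable {K ν : Type}

def output (c : Circuit K ν) : Fin c.size := ⟨c.size - 1, Nat.sub_lt c.pos Nat.one_pos⟩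

def evalGate {R : Type} [CommRing R] (c : Circuit K ν) (cst : K → R) (x : ν → R) :
    Fin c.size → R := fun i =>
  match h : c.gate i with
  | .const a => cst a
  | .var v => x v
  | .add a b =>
      have hlt := c.wf i a b (Or.inl h)
      c.evalGate cst x a + c.evalGate cst x b
  | .mul a b =>
      have hlt := c.wf i a b (Or.inr h)
      c.evalGate cst x a * c.evalGate cst x b
termination_by i => i.1
decreasing_by
  · exact hlt.1
  · exact hlt.2
  · exact hlt.1
  · exact hlt.2

/-- The value computed (at the output gate) by a circuit. -/
def eval {R : Type} [CommRing R] (c : Circuit K ν) (cst : K → R) (x : ν → R) : R :=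
  c.evalGate cst x c.output

/-- The polynomial computed by a circuit. -/
noncomputable def evalP [CommRing K] (c : Circuit K ν) : MvPolynomial ν K :=
  c.eval MvPolynomial.C MvPolynomial.X

def depthGate (c : Circuit K ν) : Fin c.size → ℕ := fun i =>
  match h : c.gate i with
  | .const _ => 0
  | .var _ => 0
  | .add a b =>
      have hlt := c.wf i a b (Or.inl h)
      max (c.depthGate a) (c.depthGate b) + 1
  | .mul a b =>
      have hlt := c.wf i a b (Or.inr h)
      max (c.depthGate a) (c.depthGate b) + 1
termination_by i => i.1
decreasing_by
  · exact hlt.1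
  · exact hlt.2
  · exact hlt.1
  · exact hlt.2

/-- Depth of a circuit: length of the longest input-to-output path. -/
def depth (c : Circuit K ν) : ℕ := c.depthGate c.output

/-- A circuit is skew if every multiplication gate has at least one argument
which is an input gate. -/
def IsSkew (c : Circuit K ν) : Prop :=
  ∀ i a b, c.gate i = .mul a b → (c.gate a).IsInput ∨ (c.gate b).IsInput

/-- `arrow j i` : there is an arrow from gate `j` to gate `i`. -/
def arrow (c : Circuit K ν) (j i : Fin c.size) : Prop :=
  ∃ a b, (c.gate i = .add a b ∨ c.gate i = .mul a b) ∧ (j = a ∨ j = b)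

/-- The subcircuit rooted at `g` is connected to the rest of the circuit only through
the arrow from `g` to `i`. -/
def OnlyConn (c : Circuit K ν) (g i : Fin c.size) : Prop :=
  ∀ j, Relation.ReflTransGen c.arrow j g →
    ∀ k, c.arrow j k → Relation.ReflTransGen c.arrow k g ∨ (j = g ∧ k = i)

/-- A circuit is weakly skew if for every multiplication gate, at least one of the incoming
arrows comes from an input gate or from a subcircuit whose only connection to the rest of
the circuit is through this arrow. -/
def IsWeaklySkew (c : Circuit K ν) : Prop :=
  ∀ i a b, c.gate i = .mul a b →
    ((c.gate a).IsInput ∨ c.OnlyConn a i) ∨ ((c.gate b).IsInput ∨ c.OnlyConn b i)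

end Circuit

/-! ### Treewidth -/

/-- `G` admits a tree-decomposition of width at most `k`. -/
def HasTreewidthAtMost {V : Type} (G : SimpleGraph V) (k : ℕ) : Prop :=
  ∃ (n : ℕ) (T : SimpleGraph (Fin n)) (X : Fin n → Finset V),
    T.IsTree ∧
    (∀ t, (X t).card ≤ k + 1) ∧
    (∀ v : V, ∃ t, v ∈ X t) ∧
    (∀ u v : V, G.Adj u v → ∃ t, u ∈ X t ∧ v ∈ X t) ∧
    (∀ v : V, (T.induce {t | v ∈ X t}).Connected)

/-- The underlying undirected simple graph of a digraph (loops discarded). -/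
def underlyingGraph {V : Type} (E : V → V → Prop) : SimpleGraph V :=
  SimpleGraph.fromRel E

/-- The underlying undirected graph of the support digraph `G_M` of a matrix. -/
def supportGraph {m : ℕ} {R : Type} [Zero R] (M : Matrix (Fin m) (Fin m) R) :
    SimpleGraph (Fin m) :=
  SimpleGraph.fromRel (fun i j => M i j ≠ 0)

/-! ### Permanent, hamiltonian, cycle covers -/

/-- The permanent of a square matrix. -/
def perm {m : ℕ} {R : Type} [CommRing R] (M : Matrix (Fin m) (Fin m) R) : R :=
  ∑ σ : Equiv.Perm (Fin m), ∏ i, M i (σ i)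

/-- The hamiltonian polynomial of a square matrix: sum over permutations that are a
single cycle on all of `Fin m`. -/
noncomputable def ham {m : ℕ} {R : Type} [CommRing R] (M : Matrix (Fin m) (Fin m) R) : R :=
  ∑ σ ∈ Finset.univ.filter
      (fun σ : Equiv.Perm (Fin m) => σ.IsCycle ∧ σ.support = Finset.univ),
    ∏ i, M i (σ i)

/-- A cycle cover of the digraph with edge relation `E`: a set of edges of `E` forming
vertex-disjoint directed cycles (loops allowed) covering every vertex exactly once,
i.e. every vertex has exactly one outgoing and exactly one incoming edge in `C`. -/
def IsCycleCover {V : Type} (E : V → V → Prop) (C : Finset (V × V)) : Prop :=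
  (∀ e ∈ C, E e.1 e.2) ∧ (∀ v : V, ∃! u, (v, u) ∈ C) ∧ (∀ v : V, ∃! u, (u, v) ∈ C)

/-- The sum of weights of all cycle covers. -/
noncomputable def cycleCoverSum {V K : Type} [Fintype V] [DecidableEq V] [CommRing K]
    (E : V → V → Prop) (w : V → V → K) : K :=
  ∑ C : Finset (V × V), if IsCycleCover E C then ∏ e ∈ C, w e.1 e.2 else 0

/-! ### Weighted DAGs and path sums -/

/-- The weight of a path (given as the list of its vertices). -/
def pathWeight {V K : Type} [CommRing K] (w : V → V → K) (l : List V) : K :=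
  ((l.zip l.tail).map fun p => w p.1 p.2).prod

/-- `l` is (the vertex list of) a directed path from `s` to `t`. -/
def IsPathFromTo {V : Type} (E : V → V → Prop) (s t : V) (l : List V) : Prop :=
  l.Chain' E ∧ l.head? = some s ∧ l.getLast? = some t

/-- The sum of the weights of all directed paths from `s` to `t`. -/
noncomputable def SW {V K : Type} [Fintype V] [DecidableEq V] [CommRing K]
    (E : V → V → Prop) (w : V → V → K) (s t : V) : K :=
  ∑ l : {l : List V // l.Nodup},
    if IsPathFromTo E s t l.1 then pathWeight w l.1 else 0

/-- A digraph is acyclic if it has no directed cycle (in particular no loop). -/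
def Acyclic {V : Type} (E : V → V → Prop) : Prop :=
  ∀ v : V, ¬ Relation.TransGen E v v

/-! ### Perfect matchings, SPM, planarity -/

/-- `M` is (the edge set of) a perfect matching of `G`. -/
def IsPerfectMatchingSet {V : Type} (G : SimpleGraph V) (M : Finset (Sym2 V)) : Prop :=
  (∀ e ∈ M, e ∈ G.edgeSet) ∧ ∀ v : V, ∃! e, e ∈ M ∧ v ∈ e

/-- The sum of the weights of all perfect matchings of `G`. -/
noncomputable def SPM {V K : Type} [Fintype V] [DecidableEq V] [CommRing K]
    (G : SimpleGraph V) (w : Sym2 V → K) : K :=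
  ∑ M : Finset (Sym2 V), if IsPerfectMatchingSet G M then ∏ e ∈ M, w e else 0

/-- A graph is planar if it has a drawing in the plane: vertices are mapped to distinct
points, edges to simple arcs joining their endpoints, arcs meet vertices only at their
endpoints, and two arcs of distinct edges do not meet except possibly at endpoints. -/
def IsPlanar {V : Type} (G : SimpleGraph V) : Prop :=
  ∃ (f : V → ℝ × ℝ) (γ : ∀ u v : V, G.Adj u v → Path (f u) (f v)),
    Function.Injective f ∧
    (∀ u v h, Function.Injective fun t : unitInterval => (γ u v h) t) ∧
    (∀ u v h (t : unitInterval), t ≠ 0 → t ≠ 1 → ∀ x : V, (γ u v h) t ≠ f x) ∧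
    (∀ u v h u' v' h', s(u, v) ≠ s(u', v') →
      ∀ (t t' : unitInterval), t ≠ 0 → t ≠ 1 → t' ≠ 0 → t' ≠ 1 →
        (γ u v h) t ≠ (γ u' v' h') t')



section CC7
variable {V : Type} [Fintype V] [DecidableEq V]
set_option linter.unusedSectionVars false

lemma mem_zip_tail {α : Type} : ∀ (l : List α) (a b : α),
    ((a, b) ∈ l.zip l.tail ↔ ∃ i, l[i]? = some a ∧ l[i+1]? = some b)
  | [], a, b => by simp
  | [x], a, b => by simp
  | x :: y :: r, a, b => by
    have ih := mem_zip_tail (y :: r) a b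
    simp only [List.tail_cons, List.zip_cons_cons, List.mem_cons] at *
    constructor
    · rintro (h | h)
      · refine ⟨0, ?_, ?_⟩ <;> simp [Prod.ext_iff] at h <;> simp [h.1, h.2]
      · obtain ⟨i, h1, h2⟩ := ih.mp h
        exact ⟨i+1, by simpa using h1, by simpa using h2⟩
    · rintro ⟨i, h1, h2⟩
      cases i with
      | zero =>
        left
        simp only [List.getElem?_cons_zero, Option.some_inj] at h1
        simp only [List.getElem?_cons_succ, List.getElem?_cons_zero, Option.some_inj] at h2
        simp [h1, h2]
      | succ i' =>
        right
        exact ih.mpr ⟨i', by simpa using h1, by simpa using h2⟩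

lemma chain'_iff_zip {α : Type} {R : α → α → Prop} : ∀ (l : List α),
    l.Chain' R ↔ ∀ p ∈ l.zip l.tail, R p.1 p.2
  | [] => by simp [List.Chain']
  | [x] => by simp [List.Chain']
  | x :: y :: r => by
    show List.IsChain R (x :: y :: r) ↔ _
    rw [List.isChain_cons_cons, ← show List.Chain' R (y :: r) ↔ List.IsChain R (y :: r) from Iff.rfl,
      chain'_iff_zip (y :: r)]
    simp only [List.tail_cons, List.zip_cons_cons, List.mem_cons]
    constructor
    · rintro ⟨h1, h2⟩ p (rfl | hp)
      · exact h1
      · exact h2 p hp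
    · intro h
      exact ⟨h _ (Or.inl rfl), fun p hp => h p (Or.inr hp)⟩

lemma zip_tail_nodup {α : Type} : ∀ (l : List α), l.Nodup → (l.zip l.tail).Nodup
  | [], _ => by simp
  | [x], _ => by simp
  | x :: y :: r, h => by
    simp only [List.tail_cons, List.zip_cons_cons]
    refine List.nodup_cons.mpr ⟨?_, zip_tail_nodup (y :: r) (List.nodup_cons.mp h).2⟩
    intro hmem
    exact (List.nodup_cons.mp h).1 (List.of_mem_zip hmem).1

lemma nodup_idx {l : List V} (h : l.Nodup) {i j : ℕ} {a : V}
    (h1 : l[i]? = some a) (h2 : l[j]? = some a) : i = j := by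
  obtain ⟨hi, e1⟩ := List.getElem?_eq_some_iff.mp h1
  obtain ⟨hj, e2⟩ := List.getElem?_eq_some_iff.mp h2
  exact (h.getElem_inj_iff).mp (e1.trans e2.symm)

lemma not_mem_dropLast {l : List V} {t : V} (h : l.Nodup) (hl : l.getLast? = some t) :
    ∀ a ∈ l.dropLast, a ≠ t := by
  have hne : l ≠ [] := by rintro rfl; simp at hl
  intro a ha heq
  have h2 := List.getLast?_eq_getLast hne
  rw [hl] at h2
  replace h2 := (Option.some_inj.mp h2).symm
  have h3 := List.dropLast_append_getLast hne
  rw [← h3] at h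
  exact List.disjoint_of_nodup_append h ha (by simp [h2, heq])


def E' (E : V → V → Prop) (s t : V) : V → V → Prop :=
  fun a b => E a b ∨ (a = t ∧ b = s) ∨ (a = b ∧ a ≠ s ∧ a ≠ t)

noncomputable def coverOf (s t : V) (l : List V) : Finset (V × V) :=
  ((l.zip l.tail).toFinset ∪ {(t, s)}) ∪
    (Finset.univ.filter (fun v => v ∉ l)).image (fun v => (v, v))

lemma mem_coverOf {s t : V} {l : List V} {a b : V} :
    (a, b) ∈ coverOf s t l ↔
      (a, b) ∈ l.zip l.tail ∨ (a = t ∧ b = s) ∨ (a = b ∧ a ∉ l) := by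
  simp only [coverOf, Finset.mem_union, Finset.mem_image, Finset.mem_filter,
    Finset.mem_univ, true_and, List.mem_toFinset, Finset.mem_singleton, Prod.ext_iff,
    Prod.mk.injEq]
  constructor
  · rintro ((h | h) | ⟨v, hv, rfl, rfl⟩)
    · exact Or.inl h
    · exact Or.inr (Or.inl h)
    · exact Or.inr (Or.inr ⟨rfl, hv⟩)
  · rintro (h | h | ⟨rfl, h⟩)
    · exact Or.inl (Or.inl h)
    · exact Or.inl (Or.inr h)
    · exact Or.inr ⟨a, h, rfl, rfl⟩

section PathProps
variable {E : V → V → Prop} {s t : V} {l : List V}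

lemma coverOf_cover (hac : Acyclic E) (hst : s ≠ t)
    (hl : l.Nodup) (hch : l.Chain' E) (hhead : l.head? = some s)
    (hlast : l.getLast? = some t) :
    IsCycleCover (E' E s t) (coverOf s t l) := by
  have hne : l ≠ [] := by rintro rfl; simp at hhead
  have hs0 : l[0]? = some s := by rw [← List.head?_eq_getElem?]; exact hhead
  have hT : l[l.length - 1]? = some t := by rw [← List.getLast?_eq_getElem?]; exact hlast
  have hsl : s ∈ l := List.mem_iff_getElem?.mpr ⟨0, hs0⟩
  have htl : t ∈ l := List.mem_iff_getElem?.mpr ⟨_, hT⟩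
  have hzipE : ∀ p ∈ l.zip l.tail, E p.1 p.2 := (chain'_iff_zip l).mp hch
  refine ⟨?_, ?_, ?_⟩
  · rintro ⟨a, b⟩ hmem
    rcases mem_coverOf.mp hmem with h | ⟨rfl, rfl⟩ | ⟨rfl, hnl⟩
    · exact Or.inl (hzipE _ h)
    · exact Or.inr (Or.inl ⟨rfl, rfl⟩)
    · exact Or.inr (Or.inr ⟨rfl, fun h => hnl (show a ∈ l from (show a = s from h) ▸ hsl), fun h => hnl (show a ∈ l from (show a = t from h) ▸ htl)⟩)
  · intro v
    by_cases hv : v ∈ l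
    · obtain ⟨i, hi⟩ := List.mem_iff_getElem?.mp hv
      have hilt : i < l.length := (List.getElem?_eq_some_iff.mp hi).1
      by_cases hit : i = l.length - 1
      · have hvt : v = t := by
          rw [hit] at hi; rw [hi] at hT; exact Option.some_inj.mp hT
        refine ⟨s, mem_coverOf.mpr (Or.inr (Or.inl ⟨hvt, rfl⟩)), ?_⟩
        intro u hu
        rcases mem_coverOf.mp hu with hz | ⟨_, rfl⟩ | ⟨_, hnl⟩
        · obtain ⟨j, hj, hj1⟩ := (mem_zip_tail l v u).mp hz
          have hji : j = i := nodup_idx hl hj hi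
          have := (List.getElem?_eq_some_iff.mp hj1).1
          omega
        · rfl
        · exact absurd hv hnl
      · have hi1 : i + 1 < l.length := by omega
        refine ⟨l[i+1], mem_coverOf.mpr (Or.inl ((mem_zip_tail l v _).mpr
          ⟨i, hi, List.getElem?_eq_getElem hi1⟩)), ?_⟩
        intro u hu
        rcases mem_coverOf.mp hu with hz | ⟨hvt, rfl⟩ | ⟨_, hnl⟩
        · obtain ⟨j, hj, hj1⟩ := (mem_zip_tail l v u).mp hz
          have hji : j = i := nodup_idx hl hj hi
          subst hji
          rw [List.getElem?_eq_getElem hi1] at hj1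
          exact (Option.some_inj.mp hj1).symm
        · exact absurd (nodup_idx hl (hvt ▸ hi) hT) hit
        · exact absurd hv hnl
    · refine ⟨v, mem_coverOf.mpr (Or.inr (Or.inr ⟨rfl, hv⟩)), ?_⟩
      intro u hu
      rcases mem_coverOf.mp hu with hz | ⟨rfl, rfl⟩ | ⟨heq, _⟩
      · obtain ⟨j, hj, _⟩ := (mem_zip_tail l v u).mp hz
        exact absurd (List.mem_iff_getElem?.mpr ⟨j, hj⟩) hv
      · exact absurd htl hv
      · exact heq.symm
  · intro v
    by_cases hv : v ∈ l
    · obtain ⟨i, hi⟩ := List.mem_iff_getElem?.mp hv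
      have hilt : i < l.length := (List.getElem?_eq_some_iff.mp hi).1
      by_cases hi0 : i = 0
      · have hvs : v = s := by
          rw [hi0] at hi; rw [hi] at hs0; exact Option.some_inj.mp hs0
        refine ⟨t, mem_coverOf.mpr (Or.inr (Or.inl ⟨rfl, hvs⟩)), ?_⟩
        intro u hu
        rcases mem_coverOf.mp hu with hz | ⟨rfl, _⟩ | ⟨rfl, hnl⟩
        · obtain ⟨j, hj, hj1⟩ := (mem_zip_tail l u v).mp hz
          have : j + 1 = 0 := nodup_idx hl hj1 (hvs ▸ hs0)
          omega
        · rfl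
        · exact absurd hv hnl
      · have him : i - 1 + 1 = i := by omega
        have hprevlt : i - 1 < l.length := by omega
        refine ⟨l[i-1], mem_coverOf.mpr (Or.inl ((mem_zip_tail l _ v).mpr
          ⟨i - 1, List.getElem?_eq_getElem hprevlt, him ▸ hi⟩)), ?_⟩
        intro u hu
        rcases mem_coverOf.mp hu with hz | ⟨rfl, hvs⟩ | ⟨rfl, hnl⟩
        · obtain ⟨j, hj, hj1⟩ := (mem_zip_tail l u v).mp hz
          have : j + 1 = i := nodup_idx hl hj1 hi
          have hji : j = i - 1 := by omega
          subst hji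
          rw [List.getElem?_eq_getElem hprevlt] at hj
          exact (Option.some_inj.mp hj).symm
        · exact absurd (nodup_idx hl (hvs ▸ hi) hs0) hi0
        · exact absurd hv hnl
    · refine ⟨v, mem_coverOf.mpr (Or.inr (Or.inr ⟨rfl, hv⟩)), ?_⟩
      intro u hu
      rcases mem_coverOf.mp hu with hz | ⟨rfl, rfl⟩ | ⟨heq, _⟩
      · obtain ⟨j, _, hj1⟩ := (mem_zip_tail l u v).mp hz
        exact absurd (List.mem_iff_getElem?.mpr ⟨j+1, hj1⟩) hv
      · exact absurd hsl hv
      · exact heq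

lemma coverOf_weight {K : Type} [CommRing K] (w : V → V → K)
    (hac : Acyclic E) (hst : s ≠ t) (hts : ¬ E t s)
    (hl : l.Nodup) (hch : l.Chain' E) :
    (∏ e ∈ coverOf s t l, (if E e.1 e.2 then w e.1 e.2 else 1)) = pathWeight w l := by
  have hnE : ∀ v : V, ¬ E v v := fun v h => hac v (Relation.TransGen.single h)
  have hzipE : ∀ p ∈ l.zip l.tail, E p.1 p.2 := (chain'_iff_zip l).mp hch
  have hd2 : Disjoint ((l.zip l.tail).toFinset : Finset (V × V)) {(t, s)} := by
    rw [Finset.disjoint_singleton_right, List.mem_toFinset]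
    intro h
    exact hts (hzipE _ h)
  have hd1 : Disjoint ((l.zip l.tail).toFinset ∪ {(t, s)})
      ((Finset.univ.filter (fun v => v ∉ l)).image (fun v => (v, v))) := by
    rw [Finset.disjoint_left]
    rintro ⟨a, b⟩ hab hin
    simp only [Finset.mem_image, Finset.mem_filter, Finset.mem_univ, true_and,
      Prod.mk.injEq] at hin
    obtain ⟨v, hv, rfl, rfl⟩ := hin
    rcases Finset.mem_union.mp hab with h | h
    · exact hnE v (hzipE _ (List.mem_toFinset.mp h))
    · rw [Finset.mem_singleton, Prod.ext_iff] at h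
      exact hst (h.2.symm.trans h.1)
  rw [coverOf, Finset.prod_union hd1, Finset.prod_union hd2]
  have h3 : (∏ e ∈ (Finset.univ.filter (fun v => v ∉ l)).image (fun v : V => (v, v)),
      (if E e.1 e.2 then w e.1 e.2 else 1)) = 1 := by
    rw [Finset.prod_image (by intro x _ y _ h; exact (Prod.ext_iff.mp h).1)]
    exact Finset.prod_eq_one fun v _ => if_neg (hnE v)
  have h2 : (∏ e ∈ ({(t, s)} : Finset (V × V)), (if E e.1 e.2 then w e.1 e.2 else 1)) = 1 := by
    rw [Finset.prod_singleton]
    exact if_neg hts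
  rw [h3, h2, mul_one, mul_one, List.prod_toFinset _ (zip_tail_nodup l hl), pathWeight]
  congr 1
  exact List.map_congr_left fun p hp => if_pos (hzipE p hp)

end PathProps

lemma trace_unique (f : V → V) (t : V) :
    ∀ (l1 : List V) (l2 : List V), l1 ≠ [] → l2 ≠ [] → l1.head? = l2.head? →
    l1.Chain' (fun a b => b = f a) → l2.Chain' (fun a b => b = f a) →
    l1.getLast? = some t → l2.getLast? = some t →
    (∀ a ∈ l1.dropLast, a ≠ t) → (∀ a ∈ l2.dropLast, a ≠ t) → l1 = l2
  | [], _, h, _, _, _, _, _, _, _, _ => absurd rfl h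
  | [a], l2, _, h2, hh, _, _, hl1, _, _, hd2 => by
    have hat : a = t := by simpa using hl1
    cases l2 with
    | nil => exact absurd rfl h2
    | cons b r =>
      have hab : a = b := by simpa using hh
      cases r with
      | nil => simp [hab]
      | cons c r' =>
        exact absurd (hab.symm.trans hat) (hd2 b (by simp [List.dropLast_cons₂]))
  | a :: x :: r, l2, _, h2, hh, hc1, hc2, hl1, hl2, hd1, hd2 => by
    cases l2 with
    | nil => exact absurd rfl h2
    | cons b r2 =>
      have hab : a = b := by simpa using hh
      subst hab
      cases r2 with
      | nil =>
        have hat : a = t := by simpa using hl2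
        exact absurd hat (hd1 a (by simp [List.dropLast_cons₂]))
      | cons y r2' =>
        have hx : x = f a := (List.isChain_cons_cons.mp hc1).1
        have hy : y = f a := (List.isChain_cons_cons.mp hc2).1
        have key := trace_unique f t (x :: r) (y :: r2') (by simp) (by simp)
          (by simp [hx, hy]) (List.isChain_cons_cons.mp hc1).2 (List.isChain_cons_cons.mp hc2).2
          (by simpa using hl1) (by simpa using hl2)
          (fun v hv => hd1 v (by simp [List.dropLast_cons₂]; exact Or.inr (by simpa using hv)))
          (fun v hv => hd2 v (by simp [List.dropLast_cons₂]; exact Or.inr (by simpa using hv)))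
        rw [key]



noncomputable def nextFn (C : Finset (V × V)) : V → V := fun v =>
  if h : ∃! u, (v, u) ∈ C then h.exists.choose else v

noncomputable def per (f : V → V) (s : V) : ℕ :=
  if h : ∃ n, 0 < n ∧ f^[n] s = s then Nat.find h else 1

noncomputable def pathOf (C : Finset (V × V)) (s : V) : List V :=
  (List.range (per (nextFn C) s)).map (fun i => (nextFn C)^[i] s)

lemma exists_period {f : V → V} (hinj : Function.Injective f) (x : V) :
    ∃ n, 0 < n ∧ f^[n] x = x := by
  have key : ∀ (i j : ℕ), i < j → f^[i] x = f^[j] x → ∃ n, 0 < n ∧ f^[n] x = x := by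
    intro i j hlt he
    refine ⟨j - i, by omega, hinj.iterate i ?_⟩
    rw [← Function.iterate_add_apply f i (j - i) x]
    rw [show i + (j - i) = j by omega, ← he]
  have h : ¬ Function.Injective (fun i : Fin (Fintype.card V + 1) => f^[(i : ℕ)] x) := by
    intro h
    have := Fintype.card_le_of_injective _ h
    simp at this
  rw [Function.not_injective_iff] at h
  obtain ⟨i, j, hij, hne⟩ := h
  rcases lt_trichotomy (i : ℕ) (j : ℕ) with h | h | h
  · exact key i j h hij
  · exact absurd (Fin.ext h) hne
  · exact key j i h hij.symm

lemma pathOf_spec {E : V → V → Prop} {s t : V}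
    (hac : Acyclic E) (hst : s ≠ t) {C : Finset (V × V)}
    (hC : IsCycleCover (E' E s t) C) :
    (pathOf C s).Nodup ∧ IsPathFromTo E s t (pathOf C s) ∧ coverOf s t (pathOf C s) = C := by
  set f : V → V := nextFn C with hfdef
  have hex : ∀ v, ∃! u, (v, u) ∈ C := hC.2.1
  have hf : ∀ v, (v, f v) ∈ C := fun v => by
    simp only [hfdef, nextFn, dif_pos (hex v)]
    exact (hex v).exists.choose_spec
  have hfu : ∀ v u, (v, u) ∈ C → u = f v := fun v u h => (hex v).unique h (hf v)
  have hinj : Function.Injective f := by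
    intro a b h
    exact (hC.2.2 (f a)).unique (hf a) (by rw [h]; exact hf b)
  have hE' : ∀ v : V, E' E s t v (f v) := fun v => hC.1 _ (hf v)
  have hnE : ∀ v : V, ¬ E v v := fun v h => hac v (Relation.TransGen.single h)
  have hper : ∃ n, 0 < n ∧ f^[n] s = s := exists_period hinj s
  have hkdef : per f s = Nat.find hper := by rw [per, dif_pos hper]
  set k : ℕ := per f s with hk
  have hkspec : 0 < k ∧ f^[k] s = s := hkdef ▸ Nat.find_spec hper
  have hkpos : 0 < k := hkspec.1
  have hks : f^[k] s = s := hkspec.2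
  have hkmin : ∀ m, 0 < m → m < k → f^[m] s ≠ s := by
    intro m hm hmk hms
    exact Nat.find_min hper (hkdef ▸ hmk) ⟨hm, hms⟩
  have hdist : ∀ i, i < k → ∀ j, j < k → f^[i] s = f^[j] s → i = j := by
    have key : ∀ i j, i < j → j < k → f^[i] s ≠ f^[j] s := by
      intro i j hij hjk he
      refine hkmin (j - i) (by omega) (by omega) (hinj.iterate i ?_)
      rw [← Function.iterate_add_apply f i (j - i) s, show i + (j - i) = j by omega, ← he]
    intro i hik j hjk he
    rcases lt_trichotomy i j with h | h | h
    · exact absurd he (key i j h hjk)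
    · exact h
    · exact absurd he.symm (key j i h hik)
  have hloopfix : ∀ (x : V) (i : ℕ), f^[i] x = f^[i+1] x → f x = x := by
    intro x i h
    rw [Function.iterate_succ_apply] at h
    exact (hinj.iterate i h).symm
  have hsucc : ∀ (n : ℕ) (x : V), f^[n+1] x = f (f^[n] x) :=
    fun n x => Function.iterate_succ_apply' f n x
  have hfsne : f s ≠ s := by
    intro h
    have : (s, s) ∈ C := by have h2 := hf s; rw [h] at h2; exact h2
    rcases hC.1 _ this with h1 | h1 | h1
    · exact hnE s h1
    · exact hst h1.1
    · exact h1.2.1 rfl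
  have hkne1 : k ≠ 1 := fun h => hfsne (by simpa [h] using hks)
  have h1k : 1 < k := by omega
  have hcases : ∀ (x : V) (m : ℕ), 0 < m → f^[m] x = x →
      (∃ i < m, f^[i] x = t ∧ f^[i+1] x = s) ∨ f x = x := by
    intro x m hm hxm
    by_cases hloop : ∃ i < m, f^[i] x = f^[i+1] x
    · obtain ⟨i, _, hi⟩ := hloop
      exact Or.inr (hloopfix x i hi)
    · left
      by_contra hno
      push_neg at hno hloop
      have hEi : ∀ i, i < m → E (f^[i] x) (f^[i+1] x) := by
        intro i hi
        have hedge : (f^[i] x, f^[i+1] x) ∈ C := by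
          rw [Function.iterate_succ_apply']
          exact hf _
        rcases hC.1 _ hedge with h1 | h1 | h1
        · exact h1
        · exact absurd h1.2 (hno i hi h1.1)
        · exact absurd h1.1 (hloop i hi)
      have htg : ∀ n, 0 < n → n ≤ m → Relation.TransGen E x (f^[n] x) := by
        intro n
        induction n with
        | zero => omega
        | succ n ih =>
          intro _ hnm
          rcases Nat.eq_zero_or_pos n with rfl | hn
          · exact Relation.TransGen.single (by simpa using hEi 0 (by omega))
          · exact Relation.TransGen.tail (ih hn (by omega)) (hEi n (by omega))
      have h5 := htg m hm le_rfl
      rw [hxm] at h5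
      exact hac x h5
  have hkt : f^[k-1] s = t ∧ f t = s := by
    rcases hcases s k hkpos hks with ⟨i, hik, hit, his⟩ | hfix
    · have hik1 : i + 1 = k := by
        by_contra h
        exact hkmin (i+1) (by omega) (by omega) his
      have hi : i = k - 1 := by omega
      subst hi
      refine ⟨hit, ?_⟩
      rw [← hit, ← hsucc, show k - 1 + 1 = k by omega]
      exact hks
    · exact absurd hfix hfsne
  have hft : f t = s := hkt.2
  have hEk : ∀ j, j + 1 < k → E (f^[j] s) (f^[j+1] s) := by
    intro j hj
    have hedge : (f^[j] s, f^[j+1] s) ∈ C := by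
      rw [Function.iterate_succ_apply']; exact hf _
    rcases hC.1 _ hedge with h1 | h1 | h1
    · exact h1
    · exact absurd (hdist j (by omega) (k-1) (by omega) (h1.1.trans hkt.1.symm)) (by omega)
    · exact absurd (hloopfix s j h1.1) hfsne
  have hreach : ∀ (n : ℕ) (x : V), f^[n] x = s → ∃ c, c < k ∧ x = f^[c] s := by
    intro n
    induction n with
    | zero => intro x hx; exact ⟨0, hkpos, by simpa using hx⟩
    | succ n ih =>
      intro x hx
      rw [Function.iterate_succ_apply] at hx
      obtain ⟨c, hck, hfc⟩ := ih (f x) hx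
      rcases Nat.eq_zero_or_pos c with rfl | hc
      · refine ⟨k - 1, by omega, hinj ?_⟩
        rw [← hsucc, show k - 1 + 1 = k by omega, hks]
        simpa using hfc
      · refine ⟨c - 1, by omega, hinj ?_⟩
        rw [← hsucc, show c - 1 + 1 = c by omega]
        exact hfc
  have hfix : ∀ v : V, (∀ c, c < k → v ≠ f^[c] s) → f v = v := by
    intro v hv
    obtain ⟨m, hm, hvm⟩ := exists_period hinj v
    rcases hcases v m hm hvm with ⟨i, _, _, his⟩ | h
    · obtain ⟨c, hck, hcv⟩ := hreach (i+1) v his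
      exact absurd hcv (hv c hck)
    · exact h
  -- the path
  set l : List V := pathOf C s with hldef
  have hlen : l.length = k := by simp [hldef, pathOf, ← hfdef, ← hk]
  have hget : ∀ i, i < k → l[i]? = some (f^[i] s) := by
    intro i hi
    show ((List.range (per (nextFn C) s)).map (fun i => (nextFn C)^[i] s))[i]? = some (f^[i] s)
    rw [List.getElem?_map, List.getElem?_range (show i < per (nextFn C) s from hi)]
    rfl
  have hmem : ∀ v : V, v ∈ l ↔ ∃ c, c < k ∧ v = f^[c] s := by
    intro v
    simp only [hldef, pathOf, ← hfdef, ← hk, List.mem_map, List.mem_range]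
    constructor
    · rintro ⟨i, hi, rfl⟩; exact ⟨i, hi, rfl⟩
    · rintro ⟨c, hc, rfl⟩; exact ⟨c, hc, rfl⟩
  have hnod : l.Nodup := by
    show ((List.range (per (nextFn C) s)).map (fun i => (nextFn C)^[i] s)).Nodup
    refine List.Nodup.map_on ?_ List.nodup_range
    intro x hx y hy h
    rw [List.mem_range] at hx hy
    exact hdist x hx y hy h
  have hhead : l.head? = some s := by
    rw [List.head?_eq_getElem?, hget 0 hkpos]
    simp
  have hlast : l.getLast? = some t := by
    rw [List.getLast?_eq_getElem?, hlen, hget (k-1) (by omega), hkt.1]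
  have hch : l.Chain' E := by
    rw [chain'_iff_zip]
    rintro ⟨a, b⟩ hp
    obtain ⟨i, h1, h2⟩ := (mem_zip_tail l a b).mp hp
    have hi1 : i + 1 < k := by
      have := (List.getElem?_eq_some_iff.mp h2).1
      omega
    have ha : a = f^[i] s := by
      have := hget i (by omega)
      rw [h1] at this
      exact Option.some_inj.mp this
    have hb : b = f^[i+1] s := by
      have := hget (i+1) hi1
      rw [h2] at this
      exact Option.some_inj.mp this
    rw [ha, hb]
    exact hEk i hi1
  refine ⟨hnod, ⟨hch, hhead, hlast⟩, ?_⟩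
  ext ⟨a, b⟩
  rw [mem_coverOf]
  constructor
  · rintro (hz | ⟨hat, hbs⟩ | ⟨rfl, hnl⟩)
    · obtain ⟨i, h1, h2⟩ := (mem_zip_tail l a b).mp hz
      have hi1 : i + 1 < k := by
        have := (List.getElem?_eq_some_iff.mp h2).1
        omega
      have ha : a = f^[i] s := by
        have := hget i (by omega); rw [h1] at this; exact Option.some_inj.mp this
      have hb : b = f^[i+1] s := by
        have := hget (i+1) hi1; rw [h2] at this; exact Option.some_inj.mp this
      have : b = f a := by rw [ha, hb, Function.iterate_succ_apply']
      rw [this]; exact hf a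
    · have h2 := hf t
      rw [hft] at h2
      rw [hat, hbs]
      exact h2
    · have hfa : f a = a := by
        refine hfix a ?_
        intro c hc hce
        exact hnl ((hmem a).mpr ⟨c, hc, hce⟩)
      have h2 := hf a
      rw [hfa] at h2
      exact h2
  · intro hab
    have hb : b = f a := hfu a b hab
    by_cases ha : a ∈ l
    · obtain ⟨i, hik, hia⟩ := (hmem a).mp ha
      by_cases hik1 : i + 1 < k
      · left
        refine (mem_zip_tail l a b).mpr ⟨i, ?_, ?_⟩
        · rw [hget i hik, hia]
        · rw [hget (i+1) hik1, hb, hia, Function.iterate_succ_apply']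
      · have hie : i = k - 1 := by omega
        right; left
        constructor
        · rw [hia, hie]; exact hkt.1
        · rw [hb, hia, hie, hkt.1, hft]
    · right; right
      have hfa : f a = a := by
        refine hfix a ?_
        intro c hc hce
        exact ha ((hmem a).mpr ⟨c, hc, hce⟩)
      exact ⟨by rw [hb, hfa], ha⟩


lemma nextFn_mem {C : Finset (V × V)} (hex : ∀ v, ∃! u, (v, u) ∈ C) (v : V) :
    (v, nextFn C v) ∈ C := by
  simp only [nextFn, dif_pos (hex v)]
  exact (hex v).exists.choose_spec

lemma coverOf_inj {E : V → V → Prop} {s t : V} (hac : Acyclic E) (hst : s ≠ t)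
    {l1 l2 : List V} (h1 : l1.Nodup) (h2 : l2.Nodup)
    (p1 : IsPathFromTo E s t l1) (p2 : IsPathFromTo E s t l2)
    (hcc : coverOf s t l1 = coverOf s t l2) : l1 = l2 := by
  have hcov : IsCycleCover (E' E s t) (coverOf s t l1) :=
    coverOf_cover hac hst h1 p1.1 p1.2.1 p1.2.2
  have hex : ∀ v, ∃! u, (v, u) ∈ coverOf s t l1 := hcov.2.1
  have hfu : ∀ v u, (v, u) ∈ coverOf s t l1 → u = nextFn (coverOf s t l1) v :=
    fun v u h => (hex v).unique h (nextFn_mem hex v)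
  have hch1 : l1.Chain' (fun a b => b = nextFn (coverOf s t l1) a) := by
    rw [chain'_iff_zip]
    rintro ⟨a, b⟩ hp
    exact hfu a b (mem_coverOf.mpr (Or.inl hp))
  have hch2 : l2.Chain' (fun a b => b = nextFn (coverOf s t l1) a) := by
    rw [chain'_iff_zip]
    rintro ⟨a, b⟩ hp
    refine hfu a b ?_
    rw [hcc]
    exact mem_coverOf.mpr (Or.inl hp)
  have hne1 : l1 ≠ [] := by rintro rfl; have := p1.2.1; simp at this
  have hne2 : l2 ≠ [] := by rintro rfl; have := p2.2.1; simp at this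
  exact trace_unique (nextFn (coverOf s t l1)) t l1 l2 hne1 hne2 (p1.2.1.trans p2.2.1.symm)
    hch1 hch2 p1.2.2 p2.2.2 (not_mem_dropLast h1 p1.2.2) (not_mem_dropLast h2 p2.2.2)

end CC7

/-- adding to an acyclic graph `G` an edge of weight 1 from `t` back to `s`
and weight-1 loops at all vertices other than `s` and `t` yields a graph `G'` whose sum of
weights of cycle covers equals `SW(G)`. -/
theorem cycleCoverSum_eq_SW {V K : Type} [Fintype V] [DecidableEq V] [CommRing K]
    (E : V → V → Prop) (w : V → V → K) (s t : V)
    (hac : Acyclic E) (hst : s ≠ t) (hts : ¬ E t s) :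
    cycleCoverSum
        (fun a b => E a b ∨ (a = t ∧ b = s) ∨ (a = b ∧ a ≠ s ∧ a ≠ t))
        (fun a b => if E a b then w a b else 1)
      = SW E w s t := by
  classical
  show cycleCoverSum (E' E s t) (fun a b => if E a b then w a b else 1) = SW E w s t
  simp only [cycleCoverSum, SW]
  rw [← Finset.sum_filter, ← Finset.sum_filter]
  have key : ∀ C : Finset (V × V), IsCycleCover (E' E s t) C →
      (pathOf C s).Nodup ∧ IsPathFromTo E s t (pathOf C s) ∧ coverOf s t (pathOf C s) = C :=
    fun C hC => pathOf_spec hac hst hC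
  refine Finset.sum_bij'
    (fun C hC => (⟨pathOf C s, (key C ((Finset.mem_filter.mp hC).2)).1⟩ : {l : List V // l.Nodup}))
    (fun l _ => coverOf s t l.1) ?_ ?_ ?_ ?_ ?_
  · intro C hC
    simp only [Finset.mem_filter, Finset.mem_univ, true_and]
    exact (key C (Finset.mem_filter.mp hC).2).2.1
  · intro l hl
    simp only [Finset.mem_filter, Finset.mem_univ, true_and] at hl ⊢
    exact coverOf_cover hac hst l.2 hl.1 hl.2.1 hl.2.2
  · intro C hC
    exact (key C (Finset.mem_filter.mp hC).2).2.2
  · intro l hl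
    simp only [Finset.mem_filter, Finset.mem_univ, true_and] at hl
    have hcv := coverOf_cover hac hst l.2 hl.1 hl.2.1 hl.2.2
    have spec := key _ hcv
    exact Subtype.ext (coverOf_inj hac hst spec.1 l.2 spec.2.1 hl spec.2.2)
  · intro C hC
    have spec := key C (Finset.mem_filter.mp hC).2
    conv_lhs => rw [← spec.2.2]
    exact coverOf_weight w hac hst hts spec.1 spec.2.1.1
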